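/- arXiv:2508.17140 — 3 statements merged into one kernel-verified Lean document; each statement's English description precedes it below -/
import Mathlib

section
/- Every separable two-qubit state satisfies the imaginarity steering inequality: if ρ is a 4×4 complex matrix of the form ρ = ∑_λ p(λ)·(A_λ ⊗ₖ B_λ), where Λ is a finite index set, p(λ) ≥ 0 with ∑_λ p(λ) = 1, each A_λ and B_λ is a 2×2 density matrix, and ⊗ₖ denotes the Kronecker product, then I₂(ρ) ≤ √2. -/
open Matrix Kronecker
open scoped ComplexOrder

/-- Trace norm of a square complex matrix: `Tr[sqrt(Aᴴ A)]`. -/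
noncomputable def traceNorm {n : Type*} [Fintype n] [DecidableEq n]
    (A : Matrix n n ℂ) : ℝ :=
  (((Matrix.posSemidef_conjTranspose_mul_self A).1.eigenvectorUnitary.1 *
      diagonal (((↑) : ℝ → ℂ) ∘ Real.sqrt ∘ (Matrix.posSemidef_conjTranspose_mul_self A).1.eigenvalues) *
      (star (Matrix.posSemidef_conjTranspose_mul_self A).1.eigenvectorUnitary :
        Matrix n n ℂ)).trace).re

/-- Robustness of imaginarity: `(1/2) ‖ρ - ρᵀ‖₁`. -/
noncomputable def roi {n : Type*} [Fintype n] [DecidableEq n]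
    (ρ : Matrix n n ℂ) : ℝ :=
  (1 / 2) * traceNorm (ρ - ρ.transpose)
def σx : Matrix (Fin 2) (Fin 2) ℂ := !![0, 1; 1, 0]
def σy : Matrix (Fin 2) (Fin 2) ℂ := !![0, -Complex.I; Complex.I, 0]
def σz : Matrix (Fin 2) (Fin 2) ℂ := !![1, 0; 0, -1]
/-- Hadamard matrix (x-basis change). -/
noncomputable def Hm : Matrix (Fin 2) (Fin 2) ℂ :=
  (Real.sqrt 2 : ℂ)⁻¹ • !![1, 1; 1, -1]
/-- Eigenvector matrix of σy (y-basis change). -/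
noncomputable def Vm : Matrix (Fin 2) (Fin 2) ℂ :=
  (Real.sqrt 2 : ℂ)⁻¹ • !![1, 1; Complex.I, -Complex.I]

/-- Robustness of imaginarity in the x-basis. -/
noncomputable def roiX (σ : Matrix (Fin 2) (Fin 2) ℂ) : ℝ := roi (Hm * σ * Hm)
/-- Robustness of imaginarity in the y-basis. -/
noncomputable def roiY (σ : Matrix (Fin 2) (Fin 2) ℂ) : ℝ := roi (Vmᴴ * σ * Vm)
noncomputable def n1 (ρ : Matrix (Fin 2 × Fin 2) (Fin 2 × Fin 2) ℂ) : ℝ :=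
  ((((1 : Matrix (Fin 2) (Fin 2) ℂ) ⊗ₖ σx) * ρ).trace).re
noncomputable def n2 (ρ : Matrix (Fin 2 × Fin 2) (Fin 2 × Fin 2) ℂ) : ℝ :=
  ((((1 : Matrix (Fin 2) (Fin 2) ℂ) ⊗ₖ σy) * ρ).trace).re
noncomputable def t11 (ρ : Matrix (Fin 2 × Fin 2) (Fin 2 × Fin 2) ℂ) : ℝ :=
  (((σx ⊗ₖ σx) * ρ).trace).re
noncomputable def t22 (ρ : Matrix (Fin 2 × Fin 2) (Fin 2 × Fin 2) ℂ) : ℝ :=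
  (((σy ⊗ₖ σy) * ρ).trace).re

/-- The imaginarity steering functional. -/
noncomputable def I2 (ρ : Matrix (Fin 2 × Fin 2) (Fin 2 × Fin 2) ℂ) : ℝ :=
  (1 / 2) * (|n1 ρ - t11 ρ| + |n1 ρ + t11 ρ| + |n2 ρ - t22 ρ| + |n2 ρ + t22 ρ|)

lemma qubit (M : Matrix (Fin 2) (Fin 2) ℂ) (hM : M.PosSemidef) (htr : M.trace = 1) :
    ∃ r s : ℝ, (σx * M).trace = (r : ℂ) ∧ (σy * M).trace = (s : ℂ) ∧ r^2 + s^2 ≤ 1 := by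
  have herm : M 1 0 = starRingEnd ℂ (M 0 1) := by
    have := hM.1
    rw [Matrix.IsHermitian] at this
    have := congrFun (congrFun this 1) 0
    simpa [Matrix.conjTranspose_apply] using this.symm
  refine ⟨2 * (M 0 1).re, -2 * (M 0 1).im, ?_, ?_, ?_⟩
  · simp [Matrix.trace, Matrix.mul_apply, Fin.sum_univ_two, σx, herm, Matrix.vecMul, dotProduct]
    rw [add_comm]
    simpa using Complex.add_conj (M 0 1)
  · simp [Matrix.trace, Matrix.mul_apply, Fin.sum_univ_two, σy, herm, Matrix.vecMul, dotProduct]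
    have h := Complex.sub_conj (M 0 1)
    push_cast at h ⊢
    linear_combination Complex.I * h + (2*(M 0 1).im : ℂ) * Complex.I_sq
  · have h1 := hM.dotProduct_mulVec_nonneg ![M 0 1, -(1/2)]
    have h2 := hM.dotProduct_mulVec_nonneg ![-(1/2), starRingEnd ℂ (M 0 1)]
    rw [Complex.le_def] at h1 h2
    have htr' : (M 0 0).re + (M 1 1).re = 1 := by
      have : M.trace = M 0 0 + M 1 1 := by simp [Matrix.trace, Fin.sum_univ_two]
      rw [htr] at this
      have := congrArg Complex.re this.symm
      simpa using this
    simp [dotProduct, Matrix.mulVec, Fin.sum_univ_two, herm, Complex.ext_iff,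
      Complex.add_re, Complex.mul_re, Complex.mul_im] at h1 h2
    nlinarith [h1.1, h2.1, sq_nonneg ((M 0 1).re), sq_nonneg ((M 0 1).im)]

lemma keybound (a1 a2 b1 b2 : ℝ) (ha : a1^2 + a2^2 ≤ 1) (hb : b1^2 + b2^2 ≤ 1) :
    |b1 - a1*b1| + |b1 + a1*b1| + |b2 - a2*b2| + |b2 + a2*b2| ≤ 2 * Real.sqrt 2 := by
  have ha1 : -1 ≤ a1 ∧ a1 ≤ 1 := by constructor <;> nlinarith [sq_nonneg a2]
  have ha2 : -1 ≤ a2 ∧ a2 ≤ 1 := by constructor <;> nlinarith [sq_nonneg a1]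
  have e1 : |b1 - a1*b1| = |b1| * (1 - a1) := by
    rw [show b1 - a1*b1 = b1*(1-a1) by ring, abs_mul,
      abs_of_nonneg (show (0:ℝ) ≤ 1 - a1 by linarith [ha1.2])]
  have e2 : |b1 + a1*b1| = |b1| * (1 + a1) := by
    rw [show b1 + a1*b1 = b1*(1+a1) by ring, abs_mul,
      abs_of_nonneg (show (0:ℝ) ≤ 1 + a1 by linarith [ha1.1])]
  have e3 : |b2 - a2*b2| = |b2| * (1 - a2) := by
    rw [show b2 - a2*b2 = b2*(1-a2) by ring, abs_mul,
      abs_of_nonneg (show (0:ℝ) ≤ 1 - a2 by linarith [ha2.2])]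
  have e4 : |b2 + a2*b2| = |b2| * (1 + a2) := by
    rw [show b2 + a2*b2 = b2*(1+a2) by ring, abs_mul,
      abs_of_nonneg (show (0:ℝ) ≤ 1 + a2 by linarith [ha2.1])]
  rw [e1, e2, e3, e4]
  have h2 : (|b1| + |b2|)^2 ≤ 2 := by
    nlinarith [sq_nonneg (|b1| - |b2|), sq_abs b1, sq_abs b2]
  have hs : |b1| + |b2| ≤ Real.sqrt 2 := by
    calc |b1| + |b2| = Real.sqrt ((|b1| + |b2|)^2) := (Real.sqrt_sq (by positivity)).symm
    _ ≤ Real.sqrt 2 := Real.sqrt_le_sqrt h2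
  linarith

/-- every separable two-qubit state satisfies the imaginarity
steering inequality `I₂(ρ) ≤ √2`. -/
theorem stmt8 {Λ : Type*} [Fintype Λ] (p : Λ → ℝ)
    (A B : Λ → Matrix (Fin 2) (Fin 2) ℂ)
    (hp : ∀ l, 0 ≤ p l) (hpsum : ∑ l, p l = 1)
    (hA : ∀ l, (A l).PosSemidef) (hAtr : ∀ l, (A l).trace = 1)
    (hB : ∀ l, (B l).PosSemidef) (hBtr : ∀ l, (B l).trace = 1)
    (ρ : Matrix (Fin 2 × Fin 2) (Fin 2 × Fin 2) ℂ)
    (hρ : ρ = ∑ l, ((p l : ℂ)) • (A l ⊗ₖ B l)) :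
    I2 ρ ≤ Real.sqrt 2 := by
  choose a1 a2 hA1 hA2 hAle using fun l => qubit (A l) (hA l) (hAtr l)
  choose b1 b2 hB1 hB2 hBle using fun l => qubit (B l) (hB l) (hBtr l)
  have key : ∀ P Q : Matrix (Fin 2) (Fin 2) ℂ,
      ((P ⊗ₖ Q) * ρ).trace = ∑ l, (p l : ℂ) * ((P * A l).trace * (Q * B l).trace) := by
    intro P Q
    rw [hρ, Matrix.mul_sum, Matrix.trace_sum]
    refine Finset.sum_congr rfl fun l _ => ?_
    rw [Matrix.mul_smul, Matrix.trace_smul, ← Matrix.mul_kronecker_mul,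
      Matrix.trace_kronecker, smul_eq_mul]
  have hn1 : n1 ρ = ∑ l, p l * b1 l := by
    unfold n1
    rw [key]
    simp [hAtr, hB1, Complex.re_sum]
  have hn2 : n2 ρ = ∑ l, p l * b2 l := by
    unfold n2
    rw [key]
    simp [hAtr, hB2, Complex.re_sum]
  have ht11 : t11 ρ = ∑ l, p l * (a1 l * b1 l) := by
    unfold t11
    rw [key]
    simp [hA1, hB1, Complex.re_sum, mul_assoc]
  have ht22 : t22 ρ = ∑ l, p l * (a2 l * b2 l) := by
    unfold t22
    rw [key]
    simp [hA2, hB2, Complex.re_sum, mul_assoc]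
  have habs : ∀ (f : Λ → ℝ), |∑ l, p l * f l| ≤ ∑ l, p l * |f l| := by
    intro f
    refine le_trans (Finset.abs_sum_le_sum_abs _ _) (Finset.sum_le_sum fun l _ => ?_)
    rw [abs_mul, abs_of_nonneg (hp l)]
  have hI : I2 ρ ≤ (1/2) * ∑ l, p l *
      (|b1 l - a1 l * b1 l| + |b1 l + a1 l * b1 l| + |b2 l - a2 l * b2 l| + |b2 l + a2 l * b2 l|) := by
    unfold I2
    rw [hn1, hn2, ht11, ht22]
    have h1 := habs (fun l => b1 l - a1 l * b1 l)
    have h2 := habs (fun l => b1 l + a1 l * b1 l)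
    have h3 := habs (fun l => b2 l - a2 l * b2 l)
    have h4 := habs (fun l => b2 l + a2 l * b2 l)
    simp only [mul_sub, mul_add, Finset.sum_sub_distrib, Finset.sum_add_distrib] at h1 h2 h3 h4 ⊢
    linarith
  refine hI.trans ?_
  have : ∑ l, p l *
      (|b1 l - a1 l * b1 l| + |b1 l + a1 l * b1 l| + |b2 l - a2 l * b2 l| + |b2 l + a2 l * b2 l|)
      ≤ ∑ l, p l * (2 * Real.sqrt 2) := by
    refine Finset.sum_le_sum fun l _ => ?_
    exact mul_le_mul_of_nonneg_left (keybound _ _ _ _ (hAle l) (hBle l)) (hp l)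
  rw [← Finset.sum_mul, hpsum, one_mul] at this
  linarith
end

section
/- For any two-qubit density matrix ρ (a 4×4 positive semidefinite matrix of trace 1, indexed by Fin 2 × Fin 2), the imaginarity steering functional computed from the steering protocol equals the four-parameter formula: define Π₊ˣ = (1+σx)/2, Π₋ˣ = (1−σx)/2, Π₊ʸ = (1+σy)/2, Π₋ʸ = (1−σy)/2, and the unnormalized conditional states of the second qubit σ_{a|x} = Tr_A[(Π_aˣ ⊗ₖ 1)·ρ] and σ_{a|y} = Tr_A[(Π_aʸ ⊗ₖ 1)·ρ] for a ∈ {+,−}, where the partial trace over the first factor is (Tr_A M)_{jk} = ∑_i M_{(i,j),(i,k)}. Then 𝓘ʸ(σ_{+|x}) + 𝓘ʸ(σ_{−|x}) + 𝓘ˣ(σ_{+|y}) + 𝓘ˣ(σ_{−|y}) = (1/2)·(|n₁ − t₁₁| + |n₁ + t₁₁| + |n₂ − t₂₂| + |n₂ + t₂₂|), where n₁ = Re Tr[(1 ⊗ₖ σx)·ρ], n₂ = Re Tr[(1 ⊗ₖ σy)·ρ], t₁₁ = Re Tr[(σx ⊗ₖ σx)·ρ], t₂₂ = Re Tr[(σy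 ⊗ₖ σy)·ρ]. -/
open Matrix Kronecker
open scoped ComplexOrder

/-- Partial trace over the first qubit. -/
noncomputable def ptrA (M : Matrix (Fin 2 × Fin 2) (Fin 2 × Fin 2) ℂ) :
    Matrix (Fin 2) (Fin 2) ℂ :=
  Matrix.of fun j k => ∑ i : Fin 2, M (i, j) (i, k)


section Aux

lemma traceNorm_antisym (c : ℂ) :
    traceNorm !![0, c; -c, 0] = 2 * ‖c‖ := by
  have hsq : ((‖c‖ : ℂ) • (1 : Matrix (Fin 2) (Fin 2) ℂ)) ^ 2
      = !![0, c; -c, 0]ᴴ * !![0, c; -c, 0] := by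
    ext i j
    fin_cases i <;> fin_cases j <;>
      simp [pow_two, Matrix.mul_apply, Fin.sum_univ_succ, Matrix.one_apply,
        Complex.mul_conj', ← Complex.ofReal_mul, Complex.conj_mul',
        Complex.mul_conj, Complex.normSq_eq_conj_mul_self]
  have hev : ∀ i, ((Matrix.posSemidef_conjTranspose_mul_self !![0, c; -c, 0]).1.eigenvalues i : ℂ)
      = ((‖c‖ ^ 2 : ℝ) : ℂ) := by
    intro i
    have h0 := (Matrix.posSemidef_conjTranspose_mul_self !![0, c; -c, 0]).1.conjStarAlgAut_star_eigenvectorUnitary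
    rw [Unitary.conjStarAlgAut_star_apply] at h0
    have this := (congrArg (fun M => (star ((Matrix.posSemidef_conjTranspose_mul_self
      !![0, c; -c, 0]).1.eigenvectorUnitary : Matrix (Fin 2) (Fin 2) ℂ)) * M *
      ((Matrix.posSemidef_conjTranspose_mul_self !![0, c; -c, 0]).1.eigenvectorUnitary :
        Matrix (Fin 2) (Fin 2) ℂ)) hsq).trans h0
    rw [smul_pow, one_pow, Matrix.mul_smul,
      Matrix.smul_mul, Matrix.mul_one, Unitary.coe_star_mul_self] at this
    have := congrFun (congrFun this i) i
    simp at this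
    rw [← this]; push_cast; ring
  rw [traceNorm, Matrix.trace_mul_cycle, Unitary.coe_star_mul_self, Matrix.one_mul]
  simp only [Matrix.trace_diagonal, Fin.sum_univ_two, Function.comp_apply]
  have hr : ∀ i, (Matrix.posSemidef_conjTranspose_mul_self !![0, c; -c, 0]).1.eigenvalues i
      = ‖c‖ ^ 2 := fun i => by exact_mod_cast hev i
  rw [hr, hr, Real.sqrt_sq (norm_nonneg c)]
  simp; ring

lemma skew_form (M : Matrix (Fin 2) (Fin 2) ℂ) :
    M - M.transpose = !![0, M 0 1 - M 1 0; -(M 0 1 - M 1 0), 0] := by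
  ext i j
  fin_cases i <;> fin_cases j <;> simp [Matrix.transpose_apply]

lemma roi_eq (M : Matrix (Fin 2) (Fin 2) ℂ) :
    roi M = norm (M 0 1 - M 1 0) := by
  rw [roi, skew_form, traceNorm_antisym]; ring

lemma sqrt2_sq : ((Real.sqrt 2 : ℂ))⁻¹ * ((Real.sqrt 2 : ℂ))⁻¹ = 2⁻¹ := by
  rw [← mul_inv, ← Complex.ofReal_mul, Real.mul_self_sqrt (by norm_num)]
  norm_num

lemma roiX_eq (σ : Matrix (Fin 2) (Fin 2) ℂ) :
    roiX σ = norm (σ 1 0 - σ 0 1) := by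
  rw [roiX, roi_eq]
  congr 1
  simp [Hm, Matrix.mul_apply, Matrix.vecMul, dotProduct, Fin.sum_univ_succ]
  ring_nf
  rw [pow_two, sqrt2_sq]
  ring

lemma roiY_eq (σ : Matrix (Fin 2) (Fin 2) ℂ) :
    roiY σ = norm (σ 0 1 + σ 1 0) := by
  rw [roiY, roi_eq]
  have h : (Vmᴴ * σ * Vm) 0 1 - (Vmᴴ * σ * Vm) 1 0 = -Complex.I * (σ 0 1 + σ 1 0) := by
    simp [Vm, Matrix.mul_apply, Matrix.vecMul, dotProduct, Fin.sum_univ_succ,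
      Matrix.conjTranspose_apply]
    ring_nf
    rw [pow_two, sqrt2_sq]
    ring_nf
  rw [h]
  simp

lemma keyX (ρ : Matrix (Fin 2 × Fin 2) (Fin 2 × Fin 2) ℂ) (hρ : ρ.IsHermitian)
    (s : ℝ) (hs : s = 1 ∨ s = -1) :
    (ptrA (((((2 : ℂ)⁻¹ • ((1 : Matrix (Fin 2) (Fin 2) ℂ) + (s:ℂ) • σx)) ⊗ₖ
        (1 : Matrix (Fin 2) (Fin 2) ℂ)) * ρ)) 0 1
     + ptrA (((((2 : ℂ)⁻¹ • ((1 : Matrix (Fin 2) (Fin 2) ℂ) + (s:ℂ) • σx)) ⊗ₖ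
        (1 : Matrix (Fin 2) (Fin 2) ℂ)) * ρ)) 1 0)
    = (((n1 ρ + s * t11 ρ)/2 : ℝ) : ℂ) := by
  have him0 : ∀ p q : Fin 2 × Fin 2, (ρ p q).im = -(ρ q p).im := fun p q => by
    conv_lhs => rw [← hρ]
    simp [Matrix.conjTranspose_apply]
  have hre0 : ∀ p q : Fin 2 × Fin 2, (ρ p q).re = (ρ q p).re := fun p q => by
    conv_lhs => rw [← hρ]
    simp [Matrix.conjTranspose_apply]
  apply Complex.ext <;>
  · simp [ptrA, n1, t11, Matrix.trace, Matrix.mul_apply, Fintype.sum_prod_type,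
      Fin.sum_univ_succ, σx, Matrix.one_apply, Prod.mk_zero_zero, Prod.mk_one_one, Complex.add_re, Complex.mul_re,
      Complex.add_im, Complex.mul_im]
    rcases hs with h | h <;> subst h <;>
      linarith [him0 0 0, hre0 0 0, him0 0 1, hre0 0 1, him0 0 (0,1), hre0 0 (0,1), him0 0 (1,0), hre0 0 (1,0), him0 1 0, hre0 1 0, him0 1 1, hre0 1 1, him0 1 (0,1), hre0 1 (0,1), him0 1 (1,0), hre0 1 (1,0), him0 (0,1) 0, hre0 (0,1) 0, him0 (0,1) 1, hre0 (0,1) 1, him0 (0,1) (0,1), hre0 (0,1) (0,1), him0 (0,1) (1,0), hre0 (0,1) (1,0), him0 (1,0) 0, hre0 (1,0) 0, him0 (1,0) 1, hre0 (1,0) 1, him0 (1,0) (0,1), hre0 (1,0) (0,1), him0 (1,0) (1,0), hre0 (1,0) (1,0)]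

lemma keyY (ρ : Matrix (Fin 2 × Fin 2) (Fin 2 × Fin 2) ℂ) (hρ : ρ.IsHermitian)
    (s : ℝ) (hs : s = 1 ∨ s = -1) :
    (ptrA (((((2 : ℂ)⁻¹ • ((1 : Matrix (Fin 2) (Fin 2) ℂ) + (s:ℂ) • σy)) ⊗ₖ
        (1 : Matrix (Fin 2) (Fin 2) ℂ)) * ρ)) 1 0
     - ptrA (((((2 : ℂ)⁻¹ • ((1 : Matrix (Fin 2) (Fin 2) ℂ) + (s:ℂ) • σy)) ⊗ₖ
        (1 : Matrix (Fin 2) (Fin 2) ℂ)) * ρ)) 0 1)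
    = Complex.I * (((n2 ρ + s * t22 ρ)/2 : ℝ) : ℂ) := by
  have him0 : ∀ p q : Fin 2 × Fin 2, (ρ p q).im = -(ρ q p).im := fun p q => by
    conv_lhs => rw [← hρ]
    simp [Matrix.conjTranspose_apply]
  have hre0 : ∀ p q : Fin 2 × Fin 2, (ρ p q).re = (ρ q p).re := fun p q => by
    conv_lhs => rw [← hρ]
    simp [Matrix.conjTranspose_apply]
  apply Complex.ext <;>
  · simp [ptrA, n2, t22, Matrix.trace, Matrix.mul_apply, Fintype.sum_prod_type,
      Fin.sum_univ_succ, σy, Matrix.one_apply, Prod.mk_zero_zero, Prod.mk_one_one, Complex.add_re, Complex.mul_re,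
      Complex.add_im, Complex.mul_im, Complex.I_re, Complex.I_im]
    rcases hs with h | h <;> subst h <;>
      linarith [him0 0 0, hre0 0 0, him0 0 1, hre0 0 1, him0 0 (0,1), hre0 0 (0,1), him0 0 (1,0), hre0 0 (1,0), him0 1 0, hre0 1 0, him0 1 1, hre0 1 1, him0 1 (0,1), hre0 1 (0,1), him0 1 (1,0), hre0 1 (1,0), him0 (0,1) 0, hre0 (0,1) 0, him0 (0,1) 1, hre0 (0,1) 1, him0 (0,1) (0,1), hre0 (0,1) (0,1), him0 (0,1) (1,0), hre0 (0,1) (1,0), him0 (1,0) 0, hre0 (1,0) 0, him0 (1,0) 1, hre0 (1,0) 1, him0 (1,0) (0,1), hre0 (1,0) (0,1), him0 (1,0) (1,0), hre0 (1,0) (1,0)]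

end Aux

/-- the imaginarity steering functional computed from the steering
protocol (conditional states of Bob given Alice's x/y measurements) equals the
four-parameter formula `I₂(ρ)`. -/
theorem stmt9 (ρ : Matrix (Fin 2 × Fin 2) (Fin 2 × Fin 2) ℂ)
    (hρ : ρ.PosSemidef) (hTr : ρ.trace = 1) :
    roiY (ptrA (((((2 : ℂ)⁻¹ • ((1 : Matrix (Fin 2) (Fin 2) ℂ) + σx)) ⊗ₖ
        (1 : Matrix (Fin 2) (Fin 2) ℂ)) * ρ)))
      + roiY (ptrA (((((2 : ℂ)⁻¹ • ((1 : Matrix (Fin 2) (Fin 2) ℂ) - σx)) ⊗ₖ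
        (1 : Matrix (Fin 2) (Fin 2) ℂ)) * ρ)))
      + roiX (ptrA (((((2 : ℂ)⁻¹ • ((1 : Matrix (Fin 2) (Fin 2) ℂ) + σy)) ⊗ₖ
        (1 : Matrix (Fin 2) (Fin 2) ℂ)) * ρ)))
      + roiX (ptrA (((((2 : ℂ)⁻¹ • ((1 : Matrix (Fin 2) (Fin 2) ℂ) - σy)) ⊗ₖ
        (1 : Matrix (Fin 2) (Fin 2) ℂ)) * ρ)))
      = (1 / 2) * (|n1 ρ - t11 ρ| + |n1 ρ + t11 ρ|
          + |n2 ρ - t22 ρ| + |n2 ρ + t22 ρ|) := by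
  have h1 : (1 : Matrix (Fin 2) (Fin 2) ℂ) + σx = 1 + ((1:ℝ):ℂ) • σx := by norm_num
  have h2 : (1 : Matrix (Fin 2) (Fin 2) ℂ) - σx = 1 + ((-1:ℝ):ℂ) • σx := by
    push_cast; module
  have h3 : (1 : Matrix (Fin 2) (Fin 2) ℂ) + σy = 1 + ((1:ℝ):ℂ) • σy := by norm_num
  have h4 : (1 : Matrix (Fin 2) (Fin 2) ℂ) - σy = 1 + ((-1:ℝ):ℂ) • σy := by
    push_cast; module
  rw [h1, h2, h3, h4, roiY_eq, roiY_eq, roiX_eq, roiX_eq,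
    keyX ρ hρ.1 1 (Or.inl rfl), keyX ρ hρ.1 (-1) (Or.inr rfl),
    keyY ρ hρ.1 1 (Or.inl rfl), keyY ρ hρ.1 (-1) (Or.inr rfl)]
  simp only [norm_mul, Complex.norm_I, Complex.norm_real, Real.norm_eq_abs, one_mul, abs_div]
  norm_num
  ring_nf
end

section
/- Monogamy of imaginarity steering: let η₀, η₁, η₂, η₃, η₄ ∈ [0,1] with η₀² + η₁² + η₂² + η₃² + η₄² = 1 and θ ∈ ℝ, and let ψ ∈ ℂ⁸ (indexed by Fin 2 × Fin 2 × Fin 2) be the tripartite pure state ψ = η₀·e_{000} + η₁·e^{iθ}·e_{100} + η₂·e_{101} + η₃·e_{110} + η₄·e_{111}. Define the reduced two-qubit density matrices ρ_AB and ρ_AC by (ρ_AB)_{(i,j),(i′,j′)} = ∑_k ψ_{(i,j,k)}·conj(ψ_{(i′,j′,k)}) and (ρ_AC)_{(i,k),(i′,k′)} = ∑_j ψ_{(i,j,k)}·conj(ψ_{(i′,j,k′)}). Then the imaginarity steering functionals of the two bipartite cuts satisfy the monogamy relation I₂(ρ_AB) + I₂(ρ_AC) ≤ 2√2. -/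
open Matrix Kronecker
open scoped ComplexOrder

private lemma aux_le_sqrt {a b : ℝ} (ha : 0 ≤ a) (h : a ^ 2 ≤ b) :
    a ≤ Real.sqrt b := by
  have hb : 0 ≤ b := le_trans (sq_nonneg a) h
  nlinarith [Real.sq_sqrt hb, Real.sqrt_nonneg b]

private lemma aux_sqrt_add {a b : ℝ} (ha : 0 ≤ a) (hb : 0 ≤ b) :
    Real.sqrt a + Real.sqrt b ≤ Real.sqrt (2 * (a + b)) := by
  apply aux_le_sqrt (by positivity)
  nlinarith [Real.sq_sqrt ha, Real.sq_sqrt hb, sq_nonneg (Real.sqrt a - Real.sqrt b),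
    Real.sqrt_nonneg a, Real.sqrt_nonneg b]

private lemma aux_pair (x B : ℝ) :
    |2 * x - 2 * B| + |2 * x + 2 * B| ≤ 4 * Real.sqrt (x ^ 2 + B ^ 2) := by
  have h4 : (4 : ℝ) * Real.sqrt (x ^ 2 + B ^ 2) = Real.sqrt (16 * (x ^ 2 + B ^ 2)) := by
    rw [show (16 : ℝ) * (x ^ 2 + B ^ 2) = 4 ^ 2 * (x ^ 2 + B ^ 2) by ring,
      Real.sqrt_mul (by norm_num), Real.sqrt_sq (by norm_num)]
  rw [h4]
  apply aux_le_sqrt (by positivity)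
  have habs : |(2 * x - 2 * B) * (2 * x + 2 * B)| ≤ 4 * x ^ 2 + 4 * B ^ 2 := by
    rw [abs_le]; constructor <;> nlinarith [sq_nonneg x, sq_nonneg B]
  nlinarith [sq_abs (2 * x - 2 * B), sq_abs (2 * x + 2 * B),
    abs_nonneg (2 * x - 2 * B), abs_nonneg (2 * x + 2 * B),
    abs_mul (2 * x - 2 * B) (2 * x + 2 * B), habs]

private lemma aux_main (x1 y1 B x2 y2 D : ℝ)
    (hS : x1 ^ 2 + y1 ^ 2 + 2 * B ^ 2 + x2 ^ 2 + y2 ^ 2 + 2 * D ^ 2 ≤ 1 / 2) :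
    1 / 2 * (|2 * x1 - 2 * B| + |2 * x1 + 2 * B| +
        |-(2 * y1) - -(2 * B)| + |-(2 * y1) + -(2 * B)|) +
      1 / 2 * (|2 * x2 - 2 * D| + |2 * x2 + 2 * D| +
        |-(2 * y2) - -(2 * D)| + |-(2 * y2) + -(2 * D)|) ≤ 2 * Real.sqrt 2 := by
  have r1 : |-(2 * y1) - -(2 * B)| = |2 * y1 - 2 * B| := by
    rw [show -(2 * y1) - -(2 * B) = -(2 * y1 - 2 * B) by ring, abs_neg]
  have r2 : |-(2 * y1) + -(2 * B)| = |2 * y1 + 2 * B| := by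
    rw [show -(2 * y1) + -(2 * B) = -(2 * y1 + 2 * B) by ring, abs_neg]
  have r3 : |-(2 * y2) - -(2 * D)| = |2 * y2 - 2 * D| := by
    rw [show -(2 * y2) - -(2 * D) = -(2 * y2 - 2 * D) by ring, abs_neg]
  have r4 : |-(2 * y2) + -(2 * D)| = |2 * y2 + 2 * D| := by
    rw [show -(2 * y2) + -(2 * D) = -(2 * y2 + 2 * D) by ring, abs_neg]
  rw [r1, r2, r3, r4]
  have p1 := aux_pair x1 B
  have p2 := aux_pair y1 B
  have p3 := aux_pair x2 D
  have p4 := aux_pair y2 D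
  set t1 := x1 ^ 2 + B ^ 2 with ht1
  set t2 := y1 ^ 2 + B ^ 2 with ht2
  set t3 := x2 ^ 2 + D ^ 2 with ht3
  set t4 := y2 ^ 2 + D ^ 2 with ht4
  have q1 : Real.sqrt t1 + Real.sqrt t2 ≤ Real.sqrt (2 * (t1 + t2)) :=
    aux_sqrt_add (by positivity) (by positivity)
  have q2 : Real.sqrt t3 + Real.sqrt t4 ≤ Real.sqrt (2 * (t3 + t4)) :=
    aux_sqrt_add (by positivity) (by positivity)
  have q3 : Real.sqrt (2 * (t1 + t2)) + Real.sqrt (2 * (t3 + t4)) ≤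
      Real.sqrt (2 * (2 * (t1 + t2) + 2 * (t3 + t4))) :=
    aux_sqrt_add (by positivity) (by positivity)
  have q4 : Real.sqrt (2 * (2 * (t1 + t2) + 2 * (t3 + t4))) ≤ Real.sqrt 2 := by
    apply Real.sqrt_le_sqrt
    have : t1 + t2 + t3 + t4 ≤ 1 / 2 := by rw [ht1, ht2, ht3, ht4]; linarith
    linarith
  linarith

set_option maxHeartbeats 2000000 in
/-- monogamy of imaginarity steering. For the general tripartite
pure state `ψ = η₀ e₀₀₀ + η₁ e^{iθ} e₁₀₀ + η₂ e₁₀₁ + η₃ e₁₁₀ + η₄ e₁₁₁`, the two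
reduced bipartite states satisfy `I₂(ρ_AB) + I₂(ρ_AC) ≤ 2√2`. -/
theorem stmt19 (η₀ η₁ η₂ η₃ η₄ θ : ℝ)
    (h0 : 0 ≤ η₀) (h0' : η₀ ≤ 1) (h1 : 0 ≤ η₁) (h1' : η₁ ≤ 1)
    (h2 : 0 ≤ η₂) (h2' : η₂ ≤ 1) (h3 : 0 ≤ η₃) (h3' : η₃ ≤ 1)
    (h4 : 0 ≤ η₄) (h4' : η₄ ≤ 1)
    (hnorm : η₀ ^ 2 + η₁ ^ 2 + η₂ ^ 2 + η₃ ^ 2 + η₄ ^ 2 = 1)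
    (ψ : Fin 2 × Fin 2 × Fin 2 → ℂ)
    (hψ : ψ = fun p =>
      if p = ((0 : Fin 2), (0 : Fin 2), (0 : Fin 2)) then (η₀ : ℂ)
      else if p = ((1 : Fin 2), (0 : Fin 2), (0 : Fin 2)) then
        (η₁ : ℂ) * Complex.exp (θ * Complex.I)
      else if p = ((1 : Fin 2), (0 : Fin 2), (1 : Fin 2)) then (η₂ : ℂ)
      else if p = ((1 : Fin 2), (1 : Fin 2), (0 : Fin 2)) then (η₃ : ℂ)
      else if p = ((1 : Fin 2), (1 : Fin 2), (1 : Fin 2)) then (η₄ : ℂ)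
      else 0)
    (ρAB ρAC : Matrix (Fin 2 × Fin 2) (Fin 2 × Fin 2) ℂ)
    (hAB : ρAB = Matrix.of fun p q =>
      ∑ k : Fin 2, ψ (p.1, p.2, k) * (starRingEnd ℂ) (ψ (q.1, q.2, k)))
    (hAC : ρAC = Matrix.of fun p q =>
      ∑ j : Fin 2, ψ (p.1, j, p.2) * (starRingEnd ℂ) (ψ (q.1, j, q.2))) :
    I2 ρAB + I2 ρAC ≤ 2 * Real.sqrt 2 := by
  subst hψ
  have e1 : n1 ρAB = 2 * (η₁ * η₃ * Real.cos θ + η₂ * η₄) := by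
    subst hAB; simp [n1, n2, t11, t22, Matrix.trace, Matrix.diag, Matrix.mul_apply,
      Fintype.sum_prod_type, Fin.sum_univ_two, σx, σy, Matrix.kroneckerMap_apply,
      Matrix.one_apply, Complex.exp_re, Complex.exp_im, Complex.add_re,
      Complex.mul_re]
    ring
  have e2 : n2 ρAB = -(2 * (η₁ * η₃ * Real.sin θ)) := by
    subst hAB; simp [n1, n2, t11, t22, Matrix.trace, Matrix.diag, Matrix.mul_apply,
      Fintype.sum_prod_type, Fin.sum_univ_two, σx, σy, Matrix.kroneckerMap_apply,
      Matrix.one_apply, Complex.exp_re, Complex.exp_im, Complex.add_re,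
      Complex.mul_re]
    ring
  have e3 : t11 ρAB = 2 * (η₀ * η₃) := by
    subst hAB; simp [n1, n2, t11, t22, Matrix.trace, Matrix.diag, Matrix.mul_apply,
      Fintype.sum_prod_type, Fin.sum_univ_two, σx, σy, Matrix.kroneckerMap_apply,
      Matrix.one_apply, Complex.exp_re, Complex.exp_im, Complex.add_re,
      Complex.mul_re]
    ring
  have e4 : t22 ρAB = -(2 * (η₀ * η₃)) := by
    subst hAB; simp [n1, n2, t11, t22, Matrix.trace, Matrix.diag, Matrix.mul_apply,
      Fintype.sum_prod_type, Fin.sum_univ_two, σx, σy, Matrix.kroneckerMap_apply,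
      Matrix.one_apply, Complex.exp_re, Complex.exp_im, Complex.add_re,
      Complex.mul_re]
    ring
  have f1 : n1 ρAC = 2 * (η₁ * η₂ * Real.cos θ + η₃ * η₄) := by
    subst hAC; simp [n1, n2, t11, t22, Matrix.trace, Matrix.diag, Matrix.mul_apply,
      Fintype.sum_prod_type, Fin.sum_univ_two, σx, σy, Matrix.kroneckerMap_apply,
      Matrix.one_apply, Complex.exp_re, Complex.exp_im, Complex.add_re,
      Complex.mul_re]
    ring
  have f2 : n2 ρAC = -(2 * (η₁ * η₂ * Real.sin θ)) := by
    subst hAC; simp [n1, n2, t11, t22, Matrix.trace, Matrix.diag, Matrix.mul_apply,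
      Fintype.sum_prod_type, Fin.sum_univ_two, σx, σy, Matrix.kroneckerMap_apply,
      Matrix.one_apply, Complex.exp_re, Complex.exp_im, Complex.add_re,
      Complex.mul_re]
    ring
  have f3 : t11 ρAC = 2 * (η₀ * η₂) := by
    subst hAC; simp [n1, n2, t11, t22, Matrix.trace, Matrix.diag, Matrix.mul_apply,
      Fintype.sum_prod_type, Fin.sum_univ_two, σx, σy, Matrix.kroneckerMap_apply,
      Matrix.one_apply, Complex.exp_re, Complex.exp_im, Complex.add_re,
      Complex.mul_re]
    ring
  have f4 : t22 ρAC = -(2 * (η₀ * η₂)) := by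
    subst hAC; simp [n1, n2, t11, t22, Matrix.trace, Matrix.diag, Matrix.mul_apply,
      Fintype.sum_prod_type, Fin.sum_univ_two, σx, σy, Matrix.kroneckerMap_apply,
      Matrix.one_apply, Complex.exp_re, Complex.exp_im, Complex.add_re,
      Complex.mul_re]
    ring
  rw [I2, I2, e1, e2, e3, e4, f1, f2, f3, f4]
  apply aux_main
  have habcd : 0 ≤ η₁ * η₂ * η₃ * η₄ := by positivity
  have hx1 : (η₁ * η₃ * Real.cos θ + η₂ * η₄) ^ 2 + (η₁ * η₃ * Real.sin θ) ^ 2 =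
      η₁ ^ 2 * η₃ ^ 2 + η₂ ^ 2 * η₄ ^ 2 + 2 * (η₁ * η₂ * η₃ * η₄) * Real.cos θ := by
    linear_combination (η₁ * η₃) ^ 2 * Real.sin_sq_add_cos_sq θ
  have hx2 : (η₁ * η₂ * Real.cos θ + η₃ * η₄) ^ 2 + (η₁ * η₂ * Real.sin θ) ^ 2 =
      η₁ ^ 2 * η₂ ^ 2 + η₃ ^ 2 * η₄ ^ 2 + 2 * (η₁ * η₂ * η₃ * η₄) * Real.cos θ := by
    linear_combination (η₁ * η₂) ^ 2 * Real.sin_sq_add_cos_sq θ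
  have hcross : 4 * (η₁ * η₂ * η₃ * η₄) * Real.cos θ ≤ 4 * (η₁ * η₂ * η₃ * η₄) := by
    nlinarith [mul_nonneg (sub_nonneg.2 (Real.cos_le_one θ)) habcd]
  have h4abcd : 4 * (η₁ * η₂ * η₃ * η₄) ≤ (η₁ ^ 2 + η₄ ^ 2) * (η₂ ^ 2 + η₃ ^ 2) := by
    nlinarith [sq_nonneg (η₁ * η₂ - η₃ * η₄), sq_nonneg (η₁ * η₃ - η₂ * η₄)]
  have hfin : 2 * ((η₂ ^ 2 + η₃ ^ 2) * (η₀ ^ 2 + η₁ ^ 2 + η₄ ^ 2)) ≤ 1 / 2 := by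
    nlinarith [sq_nonneg (η₀ ^ 2 + η₁ ^ 2 + η₄ ^ 2 - η₂ ^ 2 - η₃ ^ 2), hnorm]
  nlinarith [hx1, hx2, hcross, h4abcd, hfin]
end
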